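/- Let C be the Cantor-integer sequence for strictly increasing f with f(0)=0, f(m)>m, and α = log(f(m)+1)/log(m+1). Then limsup_{n→∞} C(n)/n^α = sup_{n≥1} C(n)/n^α and liminf_{n→∞} C(n)/n^α = inf_{n≥1} C(n)/n^α. -/

import Mathlib

def cantorC (m : ℕ) (f : ℕ → ℕ) (n : ℕ) : ℕ :=
  Nat.ofDigits (f m + 1) ((Nat.digits (m + 1) n).map f)

lemma cantorC_base_mul (m : ℕ) (hm : 1 ≤ m) (f : ℕ → ℕ) (hf0 : f 0 = 0) (n : ℕ) :
    cantorC m f ((m + 1) * n) = (f m + 1) * cantorC m f n := by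
  rcases eq_or_ne n 0 with rfl | hn
  · simp [cantorC]
  · have hb : 1 < m + 1 := by omega
    have hd : Nat.digits (m + 1) ((m + 1) * n) = 0 :: Nat.digits (m + 1) n := by
      rw [Nat.digits_def' hb (Nat.mul_pos (Nat.succ_pos m) (Nat.pos_of_ne_zero hn))]
      simp [Nat.mul_mod_right, Nat.mul_div_cancel_left _ (by omega : 0 < m + 1)]
    rw [cantorC, hd]
    simp [Nat.ofDigits_cons, hf0, cantorC]

lemma cantorC_base_pow_mul (m : ℕ) (hm : 1 ≤ m) (f : ℕ → ℕ) (hf0 : f 0 = 0) (k n : ℕ) :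
    cantorC m f ((m + 1) ^ k * n) = (f m + 1) ^ k * cantorC m f n := by
  induction k generalizing n with
  | zero => simp
  | succ k ih =>
    rw [pow_succ, mul_assoc, ih ((m + 1) * n), cantorC_base_mul m hm f hf0, pow_succ]
    ring

theorem cantor_integers_limsup_liminf (m : ℕ) (hm : 1 ≤ m) (f : ℕ → ℕ)
    (hf : ∀ i j, i < j → j ≤ m → f i < f j) (hf0 : f 0 = 0) (hfm : m < f m)
    (α : ℝ) (hα : α = Real.log (f m + 1) / Real.log (m + 1)) :
    Filter.limsup (fun n : ℕ => (cantorC m f n : ℝ) / (n : ℝ) ^ α) Filter.atTop =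
        sSup {x : ℝ | ∃ n : ℕ, 1 ≤ n ∧ x = (cantorC m f n : ℝ) / (n : ℝ) ^ α} ∧
      Filter.liminf (fun n : ℕ => (cantorC m f n : ℝ) / (n : ℝ) ^ α) Filter.atTop =
        sInf {x : ℝ | ∃ n : ℕ, 1 ≤ n ∧ x = (cantorC m f n : ℝ) / (n : ℝ) ^ α} := by
  set g : ℕ → ℝ := fun n : ℕ => (cantorC m f n : ℝ) / (n : ℝ) ^ α with hg
  set S : Set ℝ := {x : ℝ | ∃ n : ℕ, 1 ≤ n ∧ x = g n} with hS
  have hb1 : (1:ℝ) < (m:ℝ) + 1 := by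
    have : (1:ℝ) ≤ (m:ℝ) := by exact_mod_cast hm
    linarith
  have hB1 : (1:ℝ) < (f m : ℝ) + 1 := by
    have : (1:ℝ) ≤ (f m : ℝ) := by exact_mod_cast (le_trans hm hfm.le)
    linarith
  have hlogb : Real.log ((m:ℝ) + 1) ≠ 0 := ne_of_gt (Real.log_pos hb1)
  have hα0 : 0 < α := by
    rw [hα]
    exact div_pos (Real.log_pos (by linarith)) (Real.log_pos (by linarith))
  have hbα : ((m:ℝ) + 1) ^ α = (f m : ℝ) + 1 := by
    rw [Real.rpow_def_of_pos (by linarith), hα]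
    rw [mul_div_assoc', mul_comm, mul_div_assoc, div_self hlogb, mul_one, Real.exp_log (by linarith)]
  -- ((m+1)^k)^α = (f m + 1)^k
  have hpow : ∀ k : ℕ, (((m:ℝ) + 1) ^ k) ^ α = ((f m : ℝ) + 1) ^ k := fun k => by
    rw [← Real.rpow_natCast ((m:ℝ)+1) k, ← Real.rpow_mul (by linarith), mul_comm,
      Real.rpow_mul (by linarith), hbα, Real.rpow_natCast]
  -- scaling invariance
  have hgscale : ∀ k n : ℕ, 1 ≤ n → g ((m + 1) ^ k * n) = g n := by
    intro k n hn
    have hnum : (cantorC m f ((m + 1) ^ k * n) : ℝ) = ((f m : ℝ) + 1) ^ k * cantorC m f n := by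
      rw [cantorC_base_pow_mul m hm f hf0]; push_cast; ring
    have hden : (((m + 1) ^ k * n : ℕ) : ℝ) ^ α = ((f m : ℝ) + 1) ^ k * (n : ℝ) ^ α := by
      push_cast
      rw [Real.mul_rpow (by positivity) (by positivity), hpow k]
    simp only [hg, hnum, hden]
    rw [mul_div_mul_left _ _ (by positivity : ((f m : ℝ) + 1) ^ k ≠ 0)]
  have hnonneg : ∀ n : ℕ, 0 ≤ g n := fun n => by
    apply div_nonneg (by positivity) (Real.rpow_nonneg (by positivity) _)
  have hub : ∀ n : ℕ, 1 ≤ n → g n ≤ (f m : ℝ) + 1 := by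
    intro n hn
    set L := (Nat.digits (m + 1) n).length with hL
    have hLpos : 1 ≤ L := by
      rw [hL, Nat.one_le_iff_ne_zero]
      simp [Nat.digits_ne_nil_iff_ne_zero.mpr (by omega : n ≠ 0)]
    have hnum : cantorC m f n < (f m + 1) ^ L := by
      have hlt : ∀ x ∈ (Nat.digits (m + 1) n).map f, x < f m + 1 := by
        intro x hx
        obtain ⟨d, hd, rfl⟩ := List.mem_map.mp hx
        have hdm : d ≤ m := Nat.lt_succ_iff.mp (Nat.digits_lt_base (by omega) hd)
        rcases lt_or_eq_of_le hdm with h | h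
        · exact Nat.lt_succ_of_lt (hf d m h le_rfl)
        · subst h; exact Nat.lt_succ_self _
      have := Nat.ofDigits_lt_base_pow_length (by omega : 1 < f m + 1) hlt
      simpa [cantorC, hL] using this
    have hden : (m + 1) ^ (L - 1) ≤ n := by
      have h2 : (m + 1) ^ L ≤ (m + 1) * n :=
        Nat.base_pow_length_digits_le (m + 1) n (by omega) (by omega)
      have h3 : (m + 1) * (m + 1) ^ (L - 1) = (m + 1) ^ L := by
        rw [← pow_succ']
        congr 1
        omega
      exact Nat.le_of_mul_le_mul_left (by omega) (by omega : 0 < m + 1)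
    have hdenR : ((f m : ℝ) + 1) ^ (L - 1) ≤ (n : ℝ) ^ α := by
      calc ((f m : ℝ) + 1) ^ (L - 1) = (((m:ℝ) + 1) ^ (L - 1)) ^ α := (hpow (L - 1)).symm
        _ ≤ (n : ℝ) ^ α := by
            apply Real.rpow_le_rpow (by positivity) _ hα0.le
            exact_mod_cast hden
    have hnumR : (cantorC m f n : ℝ) ≤ ((f m : ℝ) + 1) ^ L := by
      have : (cantorC m f n : ℝ) < ((f m + 1 : ℕ) : ℝ) ^ L := by exact_mod_cast hnum
      push_cast at this
      linarith
    calc g n ≤ ((f m : ℝ) + 1) ^ L / ((f m : ℝ) + 1) ^ (L - 1) := by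
          apply div_le_div₀ (by positivity) hnumR (by positivity) hdenR
      _ = (f m : ℝ) + 1 := by
          rw [div_eq_iff (by positivity : ((f m : ℝ) + 1) ^ (L - 1) ≠ 0), ← pow_succ']
          congr 1
          omega
  have hSne : S.Nonempty := ⟨g 1, 1, le_refl 1, rfl⟩
  have hSbddAbove : BddAbove S := ⟨(f m : ℝ) + 1, by rintro x ⟨n, hn, rfl⟩; exact hub n hn⟩
  have hSbddBelow : BddBelow S := ⟨0, by rintro x ⟨n, hn, rfl⟩; exact hnonneg n⟩
  have hbdd_le : Filter.IsBoundedUnder (· ≤ ·) Filter.atTop g :=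
    ⟨(f m : ℝ) + 1, by
      rw [Filter.eventually_map]
      filter_upwards [Filter.eventually_ge_atTop 1] with n hn using hub n hn⟩
  have hbdd_ge : Filter.IsBoundedUnder (· ≥ ·) Filter.atTop g :=
    ⟨0, by rw [Filter.eventually_map]; exact Filter.Eventually.of_forall hnonneg⟩
  have hcob_le : Filter.IsCoboundedUnder (· ≤ ·) Filter.atTop g :=
    hbdd_ge.isCoboundedUnder_le
  have hcob_ge : Filter.IsCoboundedUnder (· ≥ ·) Filter.atTop g :=
    hbdd_le.isCoboundedUnder_ge
  have hfreq : ∀ n : ℕ, 1 ≤ n → ∃ᶠ a in Filter.atTop, g a = g n := by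
    intro n hn
    rw [Filter.frequently_atTop]
    intro N
    refine ⟨(m + 1) ^ N * n, ?_, hgscale N n hn⟩
    calc N ≤ 2 ^ N := Nat.le_of_lt (Nat.lt_two_pow_self (n := N))
      _ ≤ (m + 1) ^ N := Nat.pow_le_pow_left (by omega) N
      _ ≤ (m + 1) ^ N * n := Nat.le_mul_of_pos_right _ (by omega)
  constructor
  · apply le_antisymm
    · apply Filter.limsup_le_of_le hcob_le
      filter_upwards [Filter.eventually_ge_atTop 1] with n hn
      exact le_csSup hSbddAbove ⟨n, hn, rfl⟩
    · apply csSup_le hSne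
      rintro x ⟨n, hn, rfl⟩
      apply Filter.le_limsup_of_frequently_le _ hbdd_le
      exact (hfreq n hn).mono fun a ha => ha.ge
  · apply le_antisymm
    · apply le_csInf hSne
      rintro x ⟨n, hn, rfl⟩
      apply Filter.liminf_le_of_frequently_le _ hbdd_ge
      exact (hfreq n hn).mono fun a ha => ha.le
    · apply Filter.le_liminf_of_le hcob_ge
      filter_upwards [Filter.eventually_ge_atTop 1] with n hn
      exact csInf_le hSbddBelow ⟨n, hn, rfl⟩
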